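/- Consider a discrete triangle local model for 3 outcomes (colors R,G,B) with deterministic response functions a(β,γ), b(γ,α), c(α,β), whose output distribution has no event with exactly two equal outcomes (s112 = 0). Then for any fixed α₀, β₀, γ₀ with a(β₀,γ₀)=b(γ₀,α₀)=c(α₀,β₀)=R, and any γ', the value of b(γ',α₀) is determined by a(β₀,γ'): if a(β₀,γ')=R then b(γ',α₀)=R; if a(β₀,γ')=G then b(γ',α₀)=B; if a(β₀,γ')=B then b(γ',α₀)=G. -/
import Mathlib


/-- Exactly two of the three colors are equal. -/
def ExactlyTwoEqual (x y z : Fin 3) : Prop :=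
  (x = y ∧ x ≠ z) ∨ (x = z ∧ x ≠ y) ∨ (y = z ∧ y ≠ x)

/-- In a deterministic discrete triangle model with 3 colors
(R = 0, G = 1, B = 2) and no exactly-two-equal outcome events, fixing
(α₀,β₀,γ₀) producing RRR, Bob's response b(γ',α₀) is determined by Alice's
response a(β₀,γ'): R ↦ R, G ↦ B, B ↦ G. -/
theorem stmt_18 {A B C : Type*}
    (fa : B → C → Fin 3) (fb : C → A → Fin 3) (fc : A → B → Fin 3)
    (hno112 : ∀ (α : A) (β : B) (γ : C),
      ¬ ExactlyTwoEqual (fa β γ) (fb γ α) (fc α β))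
    (α₀ : A) (β₀ : B) (γ₀ : C)
    (hR : fa β₀ γ₀ = 0 ∧ fb γ₀ α₀ = 0 ∧ fc α₀ β₀ = 0) :
    ∀ γ' : C,
      (fa β₀ γ' = 0 → fb γ' α₀ = 0) ∧
      (fa β₀ γ' = 1 → fb γ' α₀ = 2) ∧
      (fa β₀ γ' = 2 → fb γ' α₀ = 1) := by
  intro γ'
  have h := hno112 α₀ β₀ γ'
  rw [hR.2.2] at h
  unfold ExactlyTwoEqual at h
  revert h
  generalize fa β₀ γ' = x
  generalize fb γ' α₀ = y
  fin_cases x <;> fin_cases y <;> simp
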